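/- Consider the continuous-time mirror descent dynamics ż^(t) = −α̇^(t) ∇f(x^(t)), x^(t) = ∇φ*(z^(t)), d/dt x̂^(t) = α̇^(t)(x^(t) − x̂^(t))/α^(t), with z^(0) = 0 and x̂^(0) = x^(0) ∈ X. Then for all t > 0, f(x̂^(t)) − f(x*) ≤ [α^(0)(f(x^(0)) − f(x*)) + φ(x*)] / α^(t). -/

import Mathlib

open scoped RealInnerProductSpace
open Set Filter Topology

/-- Dini-type monotonicity: if `f` is continuous on `[a,b]` and for each `s ∈ [a,b)` and
`ε > 0` the forward increments satisfy `f u - f s ≤ ε (u - s)` for `u` near `s` from the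
right, then `f b ≤ f a`. -/
lemma dini_aux {f : ℝ → ℝ} {a b : ℝ} (hab : a ≤ b)
    (hf : ContinuousOn f (Set.Icc a b))
    (h : ∀ s ∈ Set.Ico a b, ∀ ε > (0:ℝ), ∀ᶠ u in nhdsWithin s (Set.Ioi s),
      f u - f s ≤ ε * (u - s)) :
    f b ≤ f a := by
  have H := image_le_of_liminf_slope_right_le_deriv_boundary (f := f) (a := a) (b := b)
      (B := fun _ => f a) (B' := fun _ => 0) hf le_rfl continuousOn_const
      (fun x _ => hasDerivWithinAt_const x _ (f a)) ?_ (right_mem_Icc.2 hab)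
  · exact H
  · intro s hs r hr
    have hr0 : (0:ℝ) < r := hr
    have h3 : ∀ᶠ u in nhdsWithin s (Set.Ioi s), slope f s u < r := by
      filter_upwards [h s hs (r/2) (by linarith), self_mem_nhdsWithin] with u hu hu'
      have hus : 0 < u - s := sub_pos.2 hu'
      rw [slope_def_field, div_lt_iff₀ hus]
      nlinarith
    exact h3.frequently

/-- Forward invariance of a closed convex set under the averaging dynamics
`xh' = β (x - xh)` with `β ≥ 0` and `x t ∈ X`. -/
lemma invar_aux {n : ℕ} {X : Set (EuclideanSpace ℝ (Fin n))}
    (hXcl : IsClosed X) (hXcvx : Convex ℝ X) (hXne : X.Nonempty)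
    {x xh : ℝ → EuclideanSpace ℝ (Fin n)} {β : ℝ → ℝ}
    (hβ : ∀ t, 0 ≤ β t) (hxX : ∀ t, x t ∈ X)
    (hxh : ∀ t, HasDerivAt xh (β t • (x t - xh t)) t)
    (hxh0 : xh 0 ∈ X) : ∀ t, 0 ≤ t → xh t ∈ X := by
  intro t ht
  have hxhc : Continuous xh := Differentiable.continuous (fun s => (hxh s).differentiableAt)
  set D : ℝ → ℝ := fun s => Metric.infDist (xh s) X with hD
  have hDc : ContinuousOn D (Icc 0 t) := ((Metric.continuous_infDist_pt X).comp hxhc).continuousOn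
  have hD0 : D 0 = 0 := Metric.infDist_zero_of_mem hxh0
  have key : ∀ s ∈ Ico 0 t, ∀ ε > (0:ℝ), ∀ᶠ u in nhdsWithin s (Ioi s),
      D u - D s ≤ ε * (u - s) := by
    intro s _ ε hε
    obtain ⟨p, hpX, hpd⟩ := hXcl.exists_infDist_eq_dist hXne (xh s)
    have hlo := (hasDerivAt_iff_isLittleO.1 (hxh s)).def hε
    have hsmall : ∀ᶠ u in 𝓝 s, (u - s) * β s ≤ 1 := by
      have htend : Tendsto (fun u => (u - s) * β s) (𝓝 s) (𝓝 ((s - s) * β s)) :=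
        ((continuous_id.sub continuous_const).mul continuous_const).tendsto s
      have : (s - s) * β s < 1 := by simp
      exact (htend.eventually_lt_const this).mono fun u hu => hu.le
    filter_upwards [hlo.filter_mono nhdsWithin_le_nhds, hsmall.filter_mono nhdsWithin_le_nhds,
      self_mem_nhdsWithin] with u hu hu1 hu2
    have hk : 0 < u - s := sub_pos.2 hu2
    have hkβ0 : 0 ≤ (u - s) * β s := mul_nonneg hk.le (hβ s)
    set q := (1 - (u - s) * β s) • p + ((u - s) * β s) • x s with hq
    have hqX : q ∈ X := hXcvx hpX (hxX s) (by linarith) hkβ0 (by ring)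
    have hvec : xh u - q = (xh u - xh s - (u - s) • (β s • (x s - xh s)))
        + (1 - (u - s) * β s) • (xh s - p) := by
      rw [hq]; module
    have h1 : D u ≤ dist (xh u) q := Metric.infDist_le_dist_of_mem hqX
    have h2 : dist (xh u) q ≤ ε * (u - s) + (1 - (u - s) * β s) * D s := by
      rw [dist_eq_norm, hvec]
      refine (norm_add_le _ _).trans ?_
      gcongr
      · calc ‖xh u - xh s - (u - s) • (β s • (x s - xh s))‖ ≤ ε * ‖u - s‖ := hu
          _ = ε * (u - s) := by rw [Real.norm_eq_abs, abs_of_pos hk]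
      · rw [norm_smul, Real.norm_eq_abs, abs_of_nonneg (by linarith)]
        have : D s = ‖xh s - p‖ := by rw [hD]; simp only; rw [hpd, dist_eq_norm]
        rw [this]
    have hDs : 0 ≤ D s := Metric.infDist_nonneg
    nlinarith [h1.trans h2]
  have := dini_aux ht hDc key
  have hDt : D t = 0 := le_antisymm (by rw [hD0] at this; exact this) Metric.infDist_nonneg
  exact (hXcl.mem_iff_infDist_zero hXne).2 hDt

/-- Convergence of continuous-time mirror descent (CT-MD):
`f(x̂^(t)) − f(x*) ≤ (α^(0)(f(x^(0)) − f(x*)) + φ(x*)) / α^(t)`. -/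
theorem stmt4 {n : ℕ} (X : Set (EuclideanSpace ℝ (Fin n)))
    (hXcl : IsClosed X) (hXcvx : Convex ℝ X)
    (f : EuclideanSpace ℝ (Fin n) → ℝ)
    (gf : EuclideanSpace ℝ (Fin n) → EuclideanSpace ℝ (Fin n))
    (hconv : ∀ p ∈ X, ∀ q ∈ X, f q ≥ f p + ⟪gf p, q - p⟫)
    (xstar : EuclideanSpace ℝ (Fin n)) (hxstarX : xstar ∈ X)
    (hxstarmin : ∀ y ∈ X, f xstar ≤ f y)
    (α : ℝ → ℝ) (hαdiff : Differentiable ℝ α)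
    (hαpos : ∀ t, 0 < α t) (hαinc : ∀ t, 0 < deriv α t)
    (φ : EuclideanSpace ℝ (Fin n) → ℝ)
    (hφsc : StrictConvexOn ℝ X φ) (hφnonneg : ∀ y ∈ X, 0 ≤ φ y)
    (m : EuclideanSpace ℝ (Fin n) → EuclideanSpace ℝ (Fin n))
    (hmX : ∀ z, m z ∈ X)
    (hmmax : ∀ z, IsMaxOn (fun p => ⟪z, p⟫ - φ p) X (m z))
    (z x xh : ℝ → EuclideanSpace ℝ (Fin n))
    (hz : ∀ t, HasDerivAt z (-(deriv α t) • gf (x t)) t)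
    (hx : ∀ t, x t = m (z t))
    (hxh : ∀ t, HasDerivAt xh ((deriv α t / α t) • (x t - xh t)) t)
    (hz0 : z 0 = 0) (hxh0 : xh 0 = x 0) :
    ∀ t > (0 : ℝ),
      f (xh t) - f xstar ≤ (α 0 * (f (x 0) - f xstar) + φ xstar) / α t := by
  intro T hT
  have hxX : ∀ u, x u ∈ X := fun u => by rw [hx u]; exact hmX (z u)
  have hXne : X.Nonempty := ⟨xstar, hxstarX⟩
  have hβ : ∀ t, 0 ≤ deriv α t / α t := fun t => (div_pos (hαinc t) (hαpos t)).le
  have hxhT : xh T ∈ X := invar_aux hXcl hXcvx hXne hβ hxX hxh (hxh0 ▸ hxX 0) T hT.le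
  have hzc : Continuous z := Differentiable.continuous (fun t => (hz t).differentiableAt)
  have hxhc : Continuous xh := Differentiable.continuous (fun t => (hxh t).differentiableAt)
  have hαc : Continuous α := hαdiff.continuous
  -- the conjugate function
  set F : EuclideanSpace ℝ (Fin n) → ℝ := fun w => ⟪w, m w⟫ - φ (m w) with hFdef
  have hF1 : ∀ (w p : EuclideanSpace ℝ (Fin n)), p ∈ X → ⟪w, p⟫ - φ p ≤ F w := fun w p hp =>
    isMaxOn_iff.mp (hmmax w) p hp
  have hF2 : ∀ w w', F w + ⟪w' - w, m w⟫ ≤ F w' := by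
    intro w w'
    have h1 := hF1 w' (m w) (hmX w)
    have h2 : (⟪w' - w, m w⟫:ℝ) = ⟪w', m w⟫ - ⟪w, m w⟫ := inner_sub_left _ _ _
    simp only [hFdef] at *
    linarith
  have hFcvx : ConvexOn ℝ univ F := by
    refine ⟨convex_univ, ?_⟩
    intro w₁ _ w₂ _ a b ha hb hab
    have h1 := hF1 w₁ (m (a • w₁ + b • w₂)) (hmX (a • w₁ + b • w₂))
    have h2 := hF1 w₂ (m (a • w₁ + b • w₂)) (hmX (a • w₁ + b • w₂))
    have hexp : F (a • w₁ + b • w₂)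
        = a * (⟪w₁, m (a • w₁ + b • w₂)⟫ - φ (m (a • w₁ + b • w₂)))
        + b * (⟪w₂, m (a • w₁ + b • w₂)⟫ - φ (m (a • w₁ + b • w₂))) := by
      simp only [hFdef]
      rw [inner_add_left, real_inner_smul_left, real_inner_smul_left]
      linear_combination (φ (m (a • w₁ + b • w₂))) * hab
    rw [smul_eq_mul, smul_eq_mul, hexp]
    exact add_le_add (mul_le_mul_of_nonneg_left h1 ha) (mul_le_mul_of_nonneg_left h2 hb)
  have hFc : Continuous F := continuousOn_univ.mp (hFcvx.continuousOn isOpen_univ)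
  -- the Lyapunov pieces
  set A : ℝ → ℝ := fun s => α s * ((f (xh T) - f xstar) + ⟪gf (xh T), xh s - xh T⟫) with hAdef
  have hA' : ∀ s, HasDerivAt A
      (deriv α s * ((f (xh T) - f xstar) + ⟪gf (xh T), x s - xh T⟫)) s := by
    intro s
    have h1 : HasDerivAt (fun u => xh u - xh T) ((deriv α s / α s) • (x s - xh s)) s :=
      (hxh s).sub_const _
    have h2 := HasDerivAt.inner (𝕜 := ℝ) (hasDerivAt_const s (gf (xh T))) h1
    have h3 := ((hαdiff s).hasDerivAt).mul (h2.const_add (f (xh T) - f xstar))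
    have hαne : α s ≠ 0 := (hαpos s).ne'
    refine h3.congr_deriv ?_
    simp only [inner_zero_left, add_zero, real_inner_smul_right, inner_sub_right]
    field_simp
    ring
  have hub : ∀ u, deriv α u * ((f (xh T) - f xstar) + ⟪gf (xh T), x u - xh T⟫)
      + ⟪x u - xstar, -(deriv α u) • gf (x u)⟫ ≤ 0 := by
    intro u
    have h1 : (f (xh T) - f xstar) + ⟪gf (xh T), x u - xh T⟫ ≤ f (x u) - f xstar := by
      have := hconv (xh T) hxhT (x u) (hxX u)
      linarith
    have h2 : f (x u) - f xstar ≤ ⟪gf (x u), x u - xstar⟫ := by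
      have h4 := hconv (x u) (hxX u) xstar hxstarX
      have h5 : (⟪gf (x u), xstar - x u⟫:ℝ) = -⟪gf (x u), x u - xstar⟫ := by
        rw [← inner_neg_right]; congr 1; abel
      rw [h5] at h4
      linarith
    have h3 : (⟪x u - xstar, -(deriv α u) • gf (x u)⟫:ℝ)
        = -(deriv α u * ⟪gf (x u), x u - xstar⟫) := by
      rw [real_inner_smul_right, real_inner_comm]; ring
    have hα := (hαinc u).le
    rw [h3]
    nlinarith [mul_le_mul_of_nonneg_left h1 hα, mul_le_mul_of_nonneg_left h2 hα]
  set G : ℝ → ℝ := fun s => F (z s) - ⟪z s, xstar⟫ with hGdef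
  set Θ : ℝ → ℝ := fun s => -(A (T - s) + G (T - s)) with hΘdef
  have hAc : Continuous A :=
    hαc.mul (continuous_const.add (Continuous.inner continuous_const
      (hxhc.sub continuous_const)))
  have hGc : Continuous G := (hFc.comp hzc).sub (Continuous.inner hzc continuous_const)
  have hΘc : Continuous Θ :=
    ((hAc.comp (continuous_const.sub continuous_id)).add
      (hGc.comp (continuous_const.sub continuous_id))).neg
  have key2 : ∀ s ∈ Ico (0:ℝ) T, ∀ ε > (0:ℝ), ∀ᶠ v in nhdsWithin s (Ioi s),
      Θ v - Θ s ≤ ε * (v - s) := by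
    intro s _ ε hε
    set W : ℝ → ℝ := fun v => A (T - v) + ⟪z (T - v), x (T - s) - xstar⟫ with hWdef
    have hTv : HasDerivAt (fun v : ℝ => T - v) (-1) s := by
      simpa using (hasDerivAt_id s).const_sub T
    have hWA : HasDerivAt (fun v => A (T - v))
        (deriv α (T - s) * ((f (xh T) - f xstar) + ⟪gf (xh T), x (T - s) - xh T⟫) * (-1)) s := by
      simpa [Function.comp_def] using (hA' (T - s)).comp (x := s) hTv
    have hzcomp : HasDerivAt (fun v => z (T - v))
        ((-1 : ℝ) • (-(deriv α (T - s)) • gf (x (T - s)))) s := by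
      simpa [Function.comp_def] using (hz (T - s)).scomp (x := s) hTv
    have hWz : HasDerivAt (fun v => (⟪z (T - v), x (T - s) - xstar⟫:ℝ))
        (⟪(-1 : ℝ) • (-(deriv α (T - s)) • gf (x (T - s))), x (T - s) - xstar⟫) s := by
      have := HasDerivAt.inner (𝕜 := ℝ) hzcomp (hasDerivAt_const s (x (T - s) - xstar))
      simpa using this
    have hW' : HasDerivAt W
        (deriv α (T - s) * ((f (xh T) - f xstar) + ⟪gf (xh T), x (T - s) - xh T⟫) * (-1)
          + ⟪(-1 : ℝ) • (-(deriv α (T - s)) • gf (x (T - s))), x (T - s) - xstar⟫) s :=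
      hWA.add hWz
    have hW'0 : (0:ℝ) ≤
        deriv α (T - s) * ((f (xh T) - f xstar) + ⟪gf (xh T), x (T - s) - xh T⟫) * (-1)
          + ⟪(-1 : ℝ) • (-(deriv α (T - s)) • gf (x (T - s))), x (T - s) - xstar⟫ := by
      have h9 := hub (T - s)
      have h10 : (⟪(-1 : ℝ) • (-(deriv α (T - s)) • gf (x (T - s))), x (T - s) - xstar⟫:ℝ)
          = -⟪x (T - s) - xstar, -(deriv α (T - s)) • gf (x (T - s))⟫ := by
        rw [real_inner_smul_left, real_inner_comm]; ring
      rw [h10]; linarith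
    have hmono : nhdsWithin s (Ioi s) ≤ nhdsWithin s {s}ᶜ :=
      nhdsWithin_mono s (fun v hv => (mem_compl_singleton_iff).2 (ne_of_gt hv))
    have hev : ∀ᶠ v in nhdsWithin s (Ioi s), -ε < slope W s v :=
      ((hasDerivAt_iff_tendsto_slope.1 hW').mono_left hmono).eventually
        (eventually_gt_nhds (by linarith))
    filter_upwards [hev, self_mem_nhdsWithin] with v hv hv'
    have hk : 0 < v - s := sub_pos.2 hv'
    rw [slope_def_field, lt_div_iff₀ hk] at hv
    have hG : G (T - s) - G (T - v) ≤ ⟪z (T - s) - z (T - v), x (T - s) - xstar⟫ := by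
      have h6 := hF2 (z (T - s)) (z (T - v))
      rw [(hx (T - s)).symm] at h6
      simp only [hGdef, inner_sub_left, inner_sub_right] at *
      linarith
    have hΘexp : Θ v - Θ s = (A (T - s) - A (T - v)) + (G (T - s) - G (T - v)) := by
      simp only [hΘdef]; ring
    have hWexp : W s - W v = (A (T - s) - A (T - v))
        + (⟪z (T - s), x (T - s) - xstar⟫ - ⟪z (T - v), x (T - s) - xstar⟫) := by
      simp only [hWdef]; ring
    have h8 : (⟪z (T - s) - z (T - v), x (T - s) - xstar⟫:ℝ)
        = ⟪z (T - s), x (T - s) - xstar⟫ - ⟪z (T - v), x (T - s) - xstar⟫ :=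
      inner_sub_left _ _ _
    linarith
  have hfin : Θ T ≤ Θ 0 := dini_aux hT.le hΘc.continuousOn key2
  have hineq : A T + G T ≤ A 0 + G 0 := by
    simp only [hΘdef, sub_self, sub_zero] at hfin
    linarith
  have hAT : A T = α T * (f (xh T) - f xstar) := by
    simp [hAdef]
  have hGT : -(φ xstar) ≤ G T := by
    have := hF1 (z T) xstar hxstarX
    simp only [hGdef]
    linarith
  have hG0 : G 0 ≤ 0 := by
    have h11 := hφnonneg (m (z 0)) (hmX (z 0))
    simp only [hGdef, hFdef, hz0]
    simp only [inner_zero_left, zero_sub, sub_zero]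
    rw [hz0] at h11
    linarith
  have hA0 : A 0 ≤ α 0 * (f (x 0) - f xstar) := by
    have h12 := hconv (xh T) hxhT (x 0) (hxX 0)
    have h13 : (f (xh T) - f xstar) + ⟪gf (xh T), x 0 - xh T⟫ ≤ f (x 0) - f xstar := by
      linarith
    simp only [hAdef, hxh0]
    exact mul_le_mul_of_nonneg_left h13 (hαpos 0).le
  rw [le_div_iff₀ (hαpos T), mul_comm]
  nlinarith [hineq, hGT, hG0, hA0, hAT]
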